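/- If (a(n)) is a d-type k-projective sequence over a field K and f_{e,j}(z) := Σ_{n≥0} a(k^e n + j) z^n, then for every e ≥ 0 and every tuple (j_0, j_1, …, j_d) with 0 ≤ j_i ≤ k^{e+i} − 1, the d+1 power series f_{e,j_0}(z), f_{e+1,j_1}(z^k), …, f_{e+d,j_d}(z^{k^d}) are linearly dependent over the field of rational functions K(z). -/

import Mathlib

open PowerSeries

lemma aux_split {K : Type*} [CommSemiring K] {k : ℕ} (hk : 1 ≤ k) (i m : ℕ) (b : ℕ → K) :
    (PowerSeries.mk fun n => if k ^ i ∣ n then b (n / k ^ i) else 0) =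
    ∑ s ∈ Finset.range (k ^ m), PowerSeries.X ^ (k ^ i * s) *
      PowerSeries.mk (fun n => if k ^ (i + m) ∣ n then b (k ^ m * (n / k ^ (i + m)) + s) else 0) := by
  have hki : 0 < k ^ i := Nat.pow_pos (n := i) hk
  have hkm : 0 < k ^ m := Nat.pow_pos (n := m) hk
  have hkim : 0 < k ^ (i + m) := Nat.pow_pos (n := i + m) hk
  ext n
  rw [PowerSeries.coeff_mk, map_sum]
  have hterm : ∀ s, (PowerSeries.coeff n)
      (PowerSeries.X ^ (k ^ i * s) *
        PowerSeries.mk (fun n => if k ^ (i + m) ∣ n then b (k ^ m * (n / k ^ (i + m)) + s) else 0))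
      = if k ^ i * s ≤ n ∧ k ^ (i + m) ∣ (n - k ^ i * s)
          then b (k ^ m * ((n - k ^ i * s) / k ^ (i + m)) + s) else 0 := by
    intro s
    rw [mul_comm, PowerSeries.coeff_mul_X_pow', PowerSeries.coeff_mk]
    by_cases h1 : k ^ i * s ≤ n
    · by_cases h2 : k ^ (i + m) ∣ (n - k ^ i * s) <;> simp [h1, h2]
    · simp [h1]
  simp only [hterm]
  by_cases hdvd : k ^ i ∣ n
  · obtain ⟨q, rfl⟩ := hdvd
    rw [Nat.mul_div_cancel_left q hki, if_pos (dvd_mul_right _ _)]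
    rw [Finset.sum_eq_single (q % k ^ m)]
    · have hle : k ^ i * (q % k ^ m) ≤ k ^ i * q :=
        Nat.mul_le_mul_left _ (Nat.mod_le _ _)
      have hq : k ^ m * (q / k ^ m) + q % k ^ m = q := Nat.div_add_mod q _
      have hsub : k ^ i * q - k ^ i * (q % k ^ m) = k ^ (i + m) * (q / k ^ m) := by
        rw [pow_add, mul_assoc, ← Nat.mul_sub]
        congr 1
        omega
      rw [hsub, if_pos (show _ ∧ _ from ⟨hle, dvd_mul_right _ _⟩), Nat.mul_div_cancel_left _ hkim, hq]
    · intro s hs hne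
      rw [if_neg]
      rintro ⟨h1, h2⟩
      have hsq : s ≤ q := Nat.le_of_mul_le_mul_left h1 hki
      have hsub : k ^ i * q - k ^ i * s = k ^ i * (q - s) := (Nat.mul_sub _ _ _).symm
      rw [hsub, pow_add] at h2
      have h3 : k ^ m ∣ q - s := (mul_dvd_mul_iff_left (by positivity : (k:ℕ) ^ i ≠ 0)).mp h2
      obtain ⟨t, ht⟩ := h3
      have hq2 : q = s + k ^ m * t := by omega
      have hslt : s < k ^ m := Finset.mem_range.mp hs
      apply hne
      rw [hq2, Nat.add_mul_mod_self_left, Nat.mod_eq_of_lt hslt]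
    · intro h
      exact absurd (Finset.mem_range.mpr (Nat.mod_lt _ hkm)) h
  · rw [if_neg hdvd, Finset.sum_eq_zero]
    intro s _
    rw [if_neg]
    rintro ⟨h1, h2⟩
    apply hdvd
    obtain ⟨t, ht⟩ := dvd_trans (pow_dvd_pow k (Nat.le_add_right i m)) h2
    exact ⟨s + t, by rw [Nat.mul_add]; omega⟩




open RatFunc in
/-- If `(a n)` is a `d`-type `k`-projective sequence, then for all `e` and all tuples
`(j 0, ..., j d)` with `j i < k ^ (e + i)`, the `d + 1` power series
`f_{e,j_0}(z), f_{e+1,j_1}(z^k), ..., f_{e+d,j_d}(z^{k^d})` (viewed inside the field of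
formal Laurent series) are linearly dependent over the rational function field `K(z)`,
where `f_{e,j}(z) = ∑ a (k^e n + j) zⁿ`. -/
theorem kProjective_sections_linearDependent {K : Type*} [Field K] {k d : ℕ} (hk : 2 ≤ k)
    (a : ℕ → K)
    (ha : ∀ e : ℕ, ∃ g : Fin d → (ℕ → K),
      ∀ j < k ^ e, (fun n => a (k ^ e * n + j)) ∈ Submodule.span K (Set.range g))
    (e : ℕ) (j : Fin (d + 1) → ℕ) (hj : ∀ i : Fin (d + 1), j i < k ^ (e + (i : ℕ))) :
    ∃ c : Fin (d + 1) → RatFunc K, c ≠ 0 ∧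
      ∑ i : Fin (d + 1), c i •
        ((HahnSeries.ofPowerSeries ℤ K
          (PowerSeries.mk fun n =>
            if k ^ (i : ℕ) ∣ n then a (k ^ (e + (i : ℕ)) * (n / k ^ (i : ℕ)) + j i) else 0))
          : LaurentSeries K) = 0 := by
  classical
  have hk1 : 1 ≤ k := le_trans one_le_two hk
  obtain ⟨g, hg⟩ := ha (e + d)
  set F : Fin (d + 1) → LaurentSeries K := fun i =>
    ((HahnSeries.ofPowerSeries ℤ K
      (PowerSeries.mk fun n =>
        if k ^ (i : ℕ) ∣ n then a (k ^ (e + (i : ℕ)) * (n / k ^ (i : ℕ)) + j i) else 0))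
      : LaurentSeries K) with hF
  set G : Fin d → LaurentSeries K := fun t =>
    ((HahnSeries.ofPowerSeries ℤ K
      (PowerSeries.mk fun n => if k ^ d ∣ n then g t (n / k ^ d) else 0))
      : LaurentSeries K) with hG
  set W : Submodule (RatFunc K) (LaurentSeries K) :=
    Submodule.span (RatFunc K) (Set.range G) with hW
  have hbase : ∀ J, J < k ^ (e + d) →
      ((HahnSeries.ofPowerSeries ℤ K
        (PowerSeries.mk fun n =>
          if k ^ d ∣ n then a (k ^ (e + d) * (n / k ^ d) + J) else 0)) : LaurentSeries K) ∈ W := by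
    intro J hJ
    obtain ⟨c, hc⟩ := (Submodule.mem_span_range_iff_exists_fun K).mp (hg J hJ)
    have hps : (PowerSeries.mk fun n =>
        if k ^ d ∣ n then a (k ^ (e + d) * (n / k ^ d) + J) else 0)
        = ∑ t : Fin d, PowerSeries.C (c t) * (PowerSeries.mk fun n =>
            if k ^ d ∣ n then g t (n / k ^ d) else 0) := by
      ext n
      rw [PowerSeries.coeff_mk, map_sum]
      simp only [PowerSeries.coeff_C_mul, PowerSeries.coeff_mk]
      by_cases hdv : k ^ d ∣ n
      · simp only [if_pos hdv, Finset.mul_sum]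
        have h2 := congrFun hc (n / k ^ d)
        simp only [Finset.sum_apply, Pi.smul_apply, smul_eq_mul] at h2
        exact h2.symm
      · simp [hdv]
    rw [hps, map_sum]
    refine Submodule.sum_mem _ fun t _ => ?_
    have hsm : (HahnSeries.ofPowerSeries ℤ K)
        (PowerSeries.C (c t) * (PowerSeries.mk fun n =>
          if k ^ d ∣ n then g t (n / k ^ d) else 0)) = (RatFunc.C (c t)) • G t := by
      rw [map_mul, HahnSeries.ofPowerSeries_C, Algebra.smul_def]
      congr 1
      rw [← RatFunc.algebraMap_C, ← IsScalarTower.algebraMap_apply]; simp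
    rw [hsm]
    exact Submodule.smul_mem _ _ (Submodule.subset_span ⟨t, rfl⟩)
  have hmem : ∀ i : Fin (d + 1), F i ∈ W := by
    intro i
    have hile : (i : ℕ) ≤ d := Nat.lt_succ_iff.mp i.isLt
    have him : (i : ℕ) + (d - (i : ℕ)) = d := by omega
    have hpow : k ^ (e + (i : ℕ)) * k ^ (d - (i : ℕ)) = k ^ (e + d) := by
      rw [← pow_add]; congr 1; omega
    have h1 := aux_split (K := K) hk1 (i : ℕ) (d - (i : ℕ))
      (fun n => a (k ^ (e + (i : ℕ)) * n + j i))
    rw [hF]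
    simp only []
    rw [h1, map_sum]
    refine Submodule.sum_mem _ fun s hs => ?_
    have hs' : s < k ^ (d - (i : ℕ)) := Finset.mem_range.mp hs
    have hinner : (PowerSeries.mk fun n =>
        if k ^ ((i : ℕ) + (d - (i : ℕ))) ∣ n then
          a (k ^ (e + (i : ℕ)) * (k ^ (d - (i : ℕ)) * (n / k ^ ((i : ℕ) + (d - (i : ℕ)))) + s) + j i)
        else 0)
        = PowerSeries.mk fun n =>
            if k ^ d ∣ n then a (k ^ (e + d) * (n / k ^ d) + (k ^ (e + (i : ℕ)) * s + j i)) else 0 := by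
      ext n
      rw [PowerSeries.coeff_mk, PowerSeries.coeff_mk, him]
      by_cases hdv : k ^ d ∣ n
      · rw [if_pos hdv, if_pos hdv]
        congr 1
        rw [Nat.mul_add, ← Nat.mul_assoc, hpow]
        omega
      · rw [if_neg hdv, if_neg hdv]
    rw [hinner]
    have hXs : (HahnSeries.ofPowerSeries ℤ K)
        (PowerSeries.X ^ (k ^ (i : ℕ) * s) *
          PowerSeries.mk (fun n =>
            if k ^ d ∣ n then a (k ^ (e + d) * (n / k ^ d) + (k ^ (e + (i : ℕ)) * s + j i)) else 0))
        = ((RatFunc.X : RatFunc K) ^ (k ^ (i : ℕ) * s)) •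
            ((HahnSeries.ofPowerSeries ℤ K
              (PowerSeries.mk fun n =>
                if k ^ d ∣ n then a (k ^ (e + d) * (n / k ^ d) + (k ^ (e + (i : ℕ)) * s + j i)) else 0))
              : LaurentSeries K) := by
      rw [map_mul, map_pow, HahnSeries.ofPowerSeries_X, Algebra.smul_def, map_pow]
      congr 2
      exact (RatFunc.coe_X (F := K)).symm
    rw [hXs]
    refine Submodule.smul_mem _ _ (hbase _ ?_)
    calc k ^ (e + (i : ℕ)) * s + j i < k ^ (e + (i : ℕ)) * s + k ^ (e + (i : ℕ)) :=
          Nat.add_lt_add_left (hj i) _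
      _ = k ^ (e + (i : ℕ)) * (s + 1) := by ring
      _ ≤ k ^ (e + (i : ℕ)) * k ^ (d - (i : ℕ)) := Nat.mul_le_mul_left _ hs'
      _ = k ^ (e + d) := hpow
  have hnli : ¬ LinearIndependent (RatFunc K) F := by
    intro hli
    haveI : Module.Finite (RatFunc K) W :=
      Module.Finite.span_of_finite _ (Set.finite_range G)
    have hli' : LinearIndependent (RatFunc K) (fun i => (⟨F i, hmem i⟩ : W)) :=
      LinearIndependent.of_comp W.subtype hli
    have h1 := hli'.fintype_card_le_finrank
    have h2 : Module.finrank (RatFunc K) W ≤ d := by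
      have h3 := finrank_range_le_card (R := RatFunc K) G
      simpa [Set.finrank, Fintype.card_fin] using h3
    simp only [Fintype.card_fin] at h1
    omega
  rw [Fintype.not_linearIndependent_iff] at hnli
  obtain ⟨c, hsum, i0, hi0⟩ := hnli
  exact ⟨c, fun h => hi0 (by rw [h]; rfl), hsum⟩
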